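/- Generalised divergence Borel–Cantelli lemma: Let (X, 𝒜, μ) be a probability space and let {E_i}_{i∈ℕ} be a sequence of measurable subsets of X. Suppose there exist constants C' > 0 and c > 0 and a sequence of finite subsets S_k ⊆ ℕ with min S_k → +∞ as k → ∞, such that for all sufficiently large k one has ∑_{i∈S_k} μ(E_i) ≥ c and ∑_{s<t, s,t∈S_k} μ(E_s ∩ E_t) ≤ C' (∑_{i∈S_k} μ(E_i))². Then μ(E_∞) ≥ 1/(2C' + c⁻¹). -/

import Mathlib

open MeasureTheory Filter
open scoped ENNReal

/-- Cauchy–Schwarz (Chung–Erdős) step in `ℝ≥0∞`. -/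
lemma chung_erdos_ennreal {X : Type*} [MeasurableSpace X] (μ : Measure X)
    (E : ℕ → Set X) (hE : ∀ i, MeasurableSet (E i)) (u : Finset ℕ) :
    (∑ i ∈ u, μ (E i)) ^ 2 ≤ μ (⋃ i ∈ u, E i) * ∑ s ∈ u, ∑ t ∈ u, μ (E s ∩ E t) := by
  classical
  set A : Set X := ⋃ i ∈ u, E i with hA
  have hAm : MeasurableSet A := MeasurableSet.biUnion u.countable_toSet (fun i _ => hE i)
  set f : X → ℝ≥0∞ := fun x => ∑ i ∈ u, (E i).indicator 1 x with hf
  have hfm : Measurable f := by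
    apply Finset.measurable_sum
    exact fun i _ => measurable_one.indicator (hE i)
  have hI : ∫⁻ x, f x ∂μ = ∑ i ∈ u, μ (E i) := by
    rw [hf, lintegral_finset_sum _ (fun i _ => measurable_one.indicator (hE i))]
    exact Finset.sum_congr rfl fun i _ => lintegral_indicator_one₀ (hE i).nullMeasurableSet
  have hT : ∫⁻ x, f x ^ (2:ℝ) ∂μ = ∑ s ∈ u, ∑ t ∈ u, μ (E s ∩ E t) := by
    have hsq : ∀ x, f x ^ (2:ℝ) = ∑ s ∈ u, ∑ t ∈ u, (E s ∩ E t).indicator 1 x := by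
      intro x
      rw [ENNReal.rpow_two, sq, hf, Finset.sum_mul_sum]
      refine Finset.sum_congr rfl fun s _ => Finset.sum_congr rfl fun t _ => ?_
      rw [Set.inter_indicator_one]
      rfl
    simp only [hsq]
    rw [lintegral_finset_sum _ (fun s _ => Finset.measurable_sum _
      (fun t _ => measurable_one.indicator ((hE s).inter (hE t))))]
    refine Finset.sum_congr rfl fun s _ => ?_
    rw [lintegral_finset_sum _ (fun t _ => measurable_one.indicator ((hE s).inter (hE t)))]
    exact Finset.sum_congr rfl fun t _ =>
      lintegral_indicator_one₀ ((hE s).inter (hE t)).nullMeasurableSet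
  have hsupp : ∀ x, A.indicator 1 x * f x = f x := by
    intro x
    by_cases hx : x ∈ A
    · rw [Set.indicator_of_mem hx, Pi.one_apply, one_mul]
    · have hfx : f x = 0 := by
        rw [hf]
        refine Finset.sum_eq_zero fun i hi => ?_
        have : x ∉ E i := fun h => hx (Set.mem_biUnion hi h)
        simp [Set.indicator_of_notMem this]
      rw [hfx, mul_zero]
  have hCS := ENNReal.lintegral_mul_le_Lp_mul_Lq μ (Real.HolderConjugate.two_two : Real.HolderConjugate 2 2)
    (measurable_one.indicator hAm).aemeasurable hfm.aemeasurable (f := A.indicator 1) (g := f)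
  have hind2 : ∀ x, (A.indicator (1 : X → ℝ≥0∞) x) ^ (2:ℝ) = A.indicator 1 x := by
    intro x
    by_cases hx : x ∈ A <;>
      simp [Set.indicator_of_mem, Set.indicator_of_notMem, hx,
        ENNReal.zero_rpow_of_pos (by norm_num : (0:ℝ) < 2)]
  simp only [Pi.mul_apply, hsupp, hind2] at hCS
  rw [lintegral_indicator_one₀ hAm.nullMeasurableSet, hI, hT] at hCS
  calc (∑ i ∈ u, μ (E i)) ^ 2
      ≤ (μ A ^ ((1:ℝ)/2) * (∑ s ∈ u, ∑ t ∈ u, μ (E s ∩ E t)) ^ ((1:ℝ)/2)) ^ 2 := by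
        rw [← ENNReal.rpow_natCast _ 2, ← ENNReal.rpow_natCast _ 2]
        exact ENNReal.rpow_le_rpow hCS (by norm_num)
    _ = μ A * ∑ s ∈ u, ∑ t ∈ u, μ (E s ∩ E t) := by
        rw [mul_pow, ← ENNReal.rpow_natCast (μ A ^ ((1:ℝ)/2)) 2,
          ← ENNReal.rpow_natCast ((∑ s ∈ u, ∑ t ∈ u, μ (E s ∩ E t)) ^ ((1:ℝ)/2)) 2,
          ← ENNReal.rpow_mul, ← ENNReal.rpow_mul]
        norm_num

/-- **Generalised divergence Borel--Cantelli lemma.** -/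
theorem generalised_divergence_borel_cantelli
    {X : Type*} [MeasurableSpace X] (μ : Measure X) [IsProbabilityMeasure μ]
    (E : ℕ → Set X) (hE : ∀ i, MeasurableSet (E i))
    (C' c : ℝ) (hC' : 0 < C') (hc : 0 < c)
    (S : ℕ → Finset ℕ)
    (hmin : ∀ N : ℕ, ∀ᶠ k in atTop, ∀ i ∈ S k, N ≤ i)
    (hmass : ∀ᶠ k in atTop, c ≤ ∑ i ∈ S k, (μ (E i)).toReal)
    (hpair : ∀ᶠ k in atTop,
      ∑ s ∈ S k, ∑ t ∈ S k, (if s < t then (μ (E s ∩ E t)).toReal else 0)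
        ≤ C' * (∑ i ∈ S k, (μ (E i)).toReal) ^ 2) :
    1 / (2 * C' + c⁻¹) ≤ (μ (limsup E atTop)).toReal := by
  classical
  set b : ℝ := 1 / (2 * C' + c⁻¹) with hbdef
  have hbpos : 0 < b := by positivity
  -- Step 1: for each N, eventually bound μ of the tail union.
  have key : ∀ N : ℕ, ENNReal.ofReal b ≤ μ (⋃ i, ⋃ _ : N ≤ i, E i) := by
    intro N
    obtain ⟨k, hk1, hk2, hk3⟩ := ((hmin N).and (hmass.and hpair)).exists
    set u := S k with hu
    set A : Set X := ⋃ i ∈ u, E i with hA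
    set Ir : ℝ := ∑ i ∈ u, (μ (E i)).toReal with hIr
    have hIrpos : 0 < Ir := lt_of_lt_of_le hc hk2
    -- convert Chung–Erdős to reals
    have hCE := chung_erdos_ennreal μ E hE u
    have hTne : (∑ s ∈ u, ∑ t ∈ u, μ (E s ∩ E t)) ≠ ⊤ := by
      refine (ENNReal.sum_lt_top.mpr fun s _ => ?_).ne
      exact ENNReal.sum_lt_top.mpr fun t _ => measure_lt_top μ _
    have hCEr : Ir ^ 2 ≤ (μ A).toReal * (∑ s ∈ u, ∑ t ∈ u, (μ (E s ∩ E t)).toReal) := by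
      have h1 : ((∑ i ∈ u, μ (E i)) ^ 2).toReal = Ir ^ 2 := by
        rw [ENNReal.toReal_pow, ENNReal.toReal_sum (fun i _ => measure_ne_top μ _)]
      have h2 : ((μ A) * ∑ s ∈ u, ∑ t ∈ u, μ (E s ∩ E t)).toReal
          = (μ A).toReal * (∑ s ∈ u, ∑ t ∈ u, (μ (E s ∩ E t)).toReal) := by
        rw [ENNReal.toReal_mul]
        congr 1
        rw [ENNReal.toReal_sum (fun s _ =>
          (ENNReal.sum_lt_top.mpr fun t _ => measure_lt_top μ _).ne)]
        exact Finset.sum_congr rfl fun s _ =>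
          ENNReal.toReal_sum (fun t _ => measure_ne_top μ _)
      rw [← h1, ← h2]
      exact ENNReal.toReal_mono (ENNReal.mul_ne_top (measure_ne_top μ _) hTne) hCE
    -- split the double sum
    set g : ℕ → ℕ → ℝ := fun s t => (μ (E s ∩ E t)).toReal with hg
    have hgsymm : ∀ s t, g s t = g t s := by
      intro s t; rw [hg]; simp [Set.inter_comm]
    have hsplit : (∑ s ∈ u, ∑ t ∈ u, g s t)
        = Ir + 2 * ∑ s ∈ u, ∑ t ∈ u, (if s < t then g s t else 0) := by
      have hpt : ∀ s t, g s t = (if s < t then g s t else 0) + (if t < s then g s t else 0)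
          + (if s = t then g s t else 0) := by
        intro s t
        rcases lt_trichotomy s t with h | h | h
        · simp [h, asymm h, h.ne]
        · simp [h, lt_irrefl]
        · simp [h, asymm h, h.ne']
      calc ∑ s ∈ u, ∑ t ∈ u, g s t
          = (∑ s ∈ u, ∑ t ∈ u, (if s < t then g s t else 0))
            + (∑ s ∈ u, ∑ t ∈ u, (if t < s then g s t else 0))
            + (∑ s ∈ u, ∑ t ∈ u, (if s = t then g s t else 0)) := by
            simp only [← Finset.sum_add_distrib]
            exact Finset.sum_congr rfl fun s _ => Finset.sum_congr rfl fun t _ => hpt s t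
        _ = Ir + 2 * ∑ s ∈ u, ∑ t ∈ u, (if s < t then g s t else 0) := by
            have e1 : (∑ s ∈ u, ∑ t ∈ u, (if t < s then g s t else 0))
                = ∑ s ∈ u, ∑ t ∈ u, (if s < t then g s t else 0) := by
              rw [Finset.sum_comm]
              exact Finset.sum_congr rfl fun s _ => Finset.sum_congr rfl fun t _ => by
                rw [hgsymm]
            have e2 : (∑ s ∈ u, ∑ t ∈ u, (if s = t then g s t else 0)) = Ir := by
              rw [hIr]
              refine Finset.sum_congr rfl fun s hs => ?_
              rw [Finset.sum_ite_eq u s (g s), if_pos hs, hg]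
              simp [Set.inter_self]
            rw [e1, e2]; ring
    -- put the quantitative bound together
    have hPair' : ∑ s ∈ u, ∑ t ∈ u, (if s < t then g s t else 0) ≤ C' * Ir ^ 2 := hk3
    have hm0 : (0:ℝ) ≤ (μ A).toReal := ENNReal.toReal_nonneg
    have hmain : Ir ^ 2 ≤ (μ A).toReal * (Ir + 2 * (C' * Ir ^ 2)) := by
      calc Ir ^ 2 ≤ (μ A).toReal * (∑ s ∈ u, ∑ t ∈ u, g s t) := hCEr
        _ ≤ (μ A).toReal * (Ir + 2 * (C' * Ir ^ 2)) := by
            rw [hsplit]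
            gcongr
    have hbA : b ≤ (μ A).toReal := by
      have hden : (0:ℝ) < Ir + 2 * (C' * Ir ^ 2) := by positivity
      have h1 : Ir ^ 2 / (Ir + 2 * (C' * Ir ^ 2)) ≤ (μ A).toReal :=
        (div_le_iff₀ hden).mpr (by linarith [hmain])
      have h2 : Ir ^ 2 / (Ir + 2 * (C' * Ir ^ 2)) = 1 / (2 * C' + Ir⁻¹) := by
        rw [div_eq_div_iff hden.ne' (by positivity)]
        field_simp
        ring
      have h3 : b ≤ 1 / (2 * C' + Ir⁻¹) := by
        rw [hbdef]
        refine one_div_le_one_div_of_le (by positivity) ?_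
        have : Ir⁻¹ ≤ c⁻¹ := inv_anti₀ hc hk2
        linarith
      linarith [h2 ▸ h1]
    have hsub : A ⊆ ⋃ i, ⋃ _ : N ≤ i, E i := by
      rw [hA]
      refine Set.iUnion₂_subset fun i hi => ?_
      exact Set.subset_iUnion₂ (s := fun i (_ : N ≤ i) => E i) i (hk1 i hi)
    calc ENNReal.ofReal b ≤ μ A := by
          rw [← ENNReal.ofReal_toReal (measure_ne_top μ A)]
          exact ENNReal.ofReal_le_ofReal hbA
      _ ≤ μ (⋃ i, ⋃ _ : N ≤ i, E i) := measure_mono hsub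
  -- Step 2: continuity from above
  have hlimsup : limsup E atTop = ⋂ N, ⋃ i, ⋃ _ : N ≤ i, E i := by
    simp only [limsup_eq_iInf_iSup_of_nat, Set.iInf_eq_iInter, Set.iSup_eq_iUnion]
  have hanti : Antitone fun N => ⋃ i, ⋃ _ : N ≤ i, E i := by
    intro m n hmn
    dsimp only
    exact Set.iUnion₂_subset fun i hi => Set.subset_iUnion₂ (s := fun i (_ : m ≤ i) => E i) i (le_trans hmn hi)
  have hmeas : μ (limsup E atTop) = ⨅ N, μ (⋃ i, ⋃ _ : N ≤ i, E i) := by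
    rw [hlimsup]
    exact hanti.measure_iInter
      (fun N => (MeasurableSet.biUnion (Set.countable_univ.mono (Set.subset_univ _))
        (fun i _ => hE i)).nullMeasurableSet)
      ⟨0, measure_ne_top μ _⟩
  have hfinal : ENNReal.ofReal b ≤ μ (limsup E atTop) := by
    rw [hmeas]
    exact le_iInf key
  have := ENNReal.toReal_mono (measure_ne_top μ _) hfinal
  rwa [ENNReal.toReal_ofReal hbpos.le] at this
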